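/- Let X be a real normed space that is uniformly convex, i.e., δ_X(ε) > 0 for every 0 < ε ≤ 2, where δ_X is the modulus of convexity. Then for every integer n ≥ 4 there exists an n-point metric space M such that no 4-point subspace of M embeds isometrically into X. -/

import Mathlib

/-- `d` is a metric (distance function) on `α`. -/
def IsMetricDist {α : Type*} (d : α → α → ℝ) : Prop :=
  (∀ x y, d x y = 0 ↔ x = y) ∧ (∀ x y, d x y = d y x) ∧
    (∀ x y z, d x z ≤ d x y + d y z)

/-- The modulus of convexity of a normed space `X`:
`δ_X(ε) = inf { 1 − ‖u+v‖/2 : ‖u‖ ≤ 1, ‖v‖ ≤ 1, ‖u−v‖ ≥ ε }`. -/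
noncomputable def modulusOfConvexity (X : Type*) [NormedAddCommGroup X]
    [NormedSpace ℝ X] (ε : ℝ) : ℝ :=
  sInf {t : ℝ | ∃ u v : X, ‖u‖ ≤ 1 ∧ ‖v‖ ≤ 1 ∧ ε ≤ ‖u - v‖ ∧ t = 1 - ‖u + v‖ / 2}

lemma mod_le_of_pair {X : Type*} [NormedAddCommGroup X] [NormedSpace ℝ X]
    {u v : X} (hu : ‖u‖ ≤ 1) (hv : ‖v‖ ≤ 1) (huv : (1:ℝ)/2 ≤ ‖u - v‖) :
    modulusOfConvexity X (1/2) ≤ 1 - ‖u + v‖ / 2 := by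
  apply csInf_le
  · refine ⟨0, ?_⟩
    rintro t ⟨a, b, ha, hb, -, rfl⟩
    have h1 := norm_add_le a b
    linarith
  · exact ⟨u, v, hu, hv, huv, rfl⟩

lemma pair_lemma {X : Type*} [NormedAddCommGroup X] [NormedSpace ℝ X]
    {ax ay ac : ℝ} (hax : 0 < ax) (hay : 0 < ay) (hac : 0 < ac)
    (hx : ac / (ax + ac) < modulusOfConvexity X (1/2))
    (hy : ac / (ay + ac) < modulusOfConvexity X (1/2))
    {p q : X} (hp : ‖p‖ = ax + ac) (hq : ‖q‖ = ay + ac) (hpq : ‖p - q‖ = ax + ay) :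
    ‖(ax + ac)⁻¹ • p + (ay + ac)⁻¹ • q‖ < 1/2 := by
  by_contra hcon
  push_neg at hcon
  have hrx : (0:ℝ) < ax + ac := by linarith
  have hry : (0:ℝ) < ay + ac := by linarith
  set e := (ax + ac)⁻¹ • p with he
  set g := (ay + ac)⁻¹ • q with hg
  have hne : ‖e‖ = 1 := by
    rw [he, norm_smul, hp, Real.norm_eq_abs, abs_inv, abs_of_pos hrx]
    field_simp
  have hng : ‖g‖ = 1 := by
    rw [hg, norm_smul, hq, Real.norm_eq_abs, abs_inv, abs_of_pos hry]
    field_simp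
  have hesm : (ax + ac) • e = p := smul_inv_smul₀ hrx.ne' p
  have hgsm : (ay + ac) • g = q := smul_inv_smul₀ hry.ne' q
  have key : modulusOfConvexity X (1/2) ≤ 1 - ‖e - g‖ / 2 := by
    have h := mod_le_of_pair (u := e) (v := -g)
      (by rw [hne]) (by rw [norm_neg, hng])
      (by rw [sub_neg_eq_add]; exact hcon)
    have h2 : e + -g = e - g := by abel
    rwa [h2] at h
  rcases le_total ax ay with hxy | hxy
  · -- min is rx = ax + ac
    have hid : p - q = (ax+ac) • (e - g) - ((ay+ac)-(ax+ac)) • g := by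
      rw [smul_sub, hesm, sub_smul, hgsm]; abel
    have hb : ‖p - q‖ ≤ (ax+ac) * ‖e - g‖ + ((ay+ac)-(ax+ac)) := by
      calc ‖p - q‖ ≤ ‖(ax+ac) • (e - g)‖ + ‖((ay+ac)-(ax+ac)) • g‖ := by
            rw [hid]; exact norm_sub_le _ _
        _ = (ax+ac) * ‖e - g‖ + ((ay+ac)-(ax+ac)) := by
            rw [norm_smul, norm_smul, hng, Real.norm_eq_abs, Real.norm_eq_abs,
              abs_of_pos hrx, abs_of_nonneg (by linarith : (0:ℝ) ≤ (ay+ac)-(ax+ac))]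
            ring
    rw [hpq] at hb
    have h4 : 2*ax ≤ (ax+ac) * ‖e - g‖ := by linarith
    have h5 : ac < modulusOfConvexity X (1/2) * (ax+ac) := (div_lt_iff₀ hrx).mp hx
    nlinarith [mul_le_mul_of_nonneg_left key hrx.le]
  · -- min is ry = ay + ac
    have hid : q - p = (ay+ac) • (g - e) - ((ax+ac)-(ay+ac)) • e := by
      rw [smul_sub, hgsm, sub_smul, hesm]; abel
    have hb : ‖q - p‖ ≤ (ay+ac) * ‖g - e‖ + ((ax+ac)-(ay+ac)) := by
      calc ‖q - p‖ ≤ ‖(ay+ac) • (g - e)‖ + ‖((ax+ac)-(ay+ac)) • e‖ := by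
            rw [hid]; exact norm_sub_le _ _
        _ = (ay+ac) * ‖g - e‖ + ((ax+ac)-(ay+ac)) := by
            rw [norm_smul, norm_smul, hne, Real.norm_eq_abs, Real.norm_eq_abs,
              abs_of_pos hry, abs_of_nonneg (by linarith : (0:ℝ) ≤ (ax+ac)-(ay+ac))]
            ring
    rw [norm_sub_rev, hpq] at hb
    rw [norm_sub_rev g e] at hb
    have h4 : 2*ay ≤ (ay+ac) * ‖e - g‖ := by linarith
    have h5 : ac < modulusOfConvexity X (1/2) * (ay+ac) := (div_lt_iff₀ hry).mp hy
    nlinarith [mul_le_mul_of_nonneg_left key hry.le]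

/-- If `X` is a uniformly convex real normed space, then for every `n ≥ 4` there exists
an `n`-point metric space (a metric `d` on `Fin n`) such that no 4-point subspace of it
embeds isometrically into `X`. -/
theorem stmt16 {X : Type*} [NormedAddCommGroup X] [NormedSpace ℝ X]
    (hX : ∀ ε : ℝ, 0 < ε → ε ≤ 2 → 0 < modulusOfConvexity X ε)
    (n : ℕ) (hn : 4 ≤ n) :
    ∃ d : Fin n → Fin n → ℝ, IsMetricDist d ∧
      ∀ S : Finset (Fin n), S.card = 4 →
        ¬ ∃ f : Fin n → X, ∀ x ∈ S, ∀ y ∈ S, ‖f x - f y‖ = d x y := by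
  have hδ : 0 < modulusOfConvexity X (1/2) := hX (1/2) (by norm_num) (by norm_num)
  set τ : ℝ := min (modulusOfConvexity X (1/2)) 1 / 2 with hτdef
  have hmin : 0 < min (modulusOfConvexity X (1/2)) 1 := lt_min hδ one_pos
  have hτ0 : 0 < τ := by rw [hτdef]; linarith
  have hτ1 : τ ≤ 1 := by
    have : min (modulusOfConvexity X (1/2)) 1 ≤ 1 := min_le_right _ _
    rw [hτdef]; linarith
  have hτδ : τ < modulusOfConvexity X (1/2) := by
    have : min (modulusOfConvexity X (1/2)) 1 ≤ modulusOfConvexity X (1/2) :=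
      min_le_left _ _
    rw [hτdef]; linarith
  set a : Fin n → ℝ := fun i => τ ^ (i : ℕ) with ha
  have hapos : ∀ i, 0 < a i := fun i => pow_pos hτ0 _
  refine ⟨fun i j => if i = j then 0 else a i + a j, ⟨?_, ?_, ?_⟩, ?_⟩
  · intro x y
    constructor
    · intro h0
      by_contra hne
      dsimp only at h0
      rw [if_neg hne] at h0
      have := hapos x; have := hapos y; linarith
    · rintro rfl; simp
  · intro x y
    dsimp only
    by_cases h : x = y
    · subst h; simp
    · rw [if_neg h, if_neg (Ne.symm h), add_comm]
  · intro x y z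
    dsimp only
    by_cases hxz : x = z
    · subst hxz
      rw [if_pos rfl]
      have h1 : (0:ℝ) ≤ if x = y then 0 else a x + a y := by
        split
        · exact le_refl 0
        · have := hapos x; have := hapos y; linarith
      have h2 : (0:ℝ) ≤ if y = x then 0 else a y + a x := by
        split
        · exact le_refl 0
        · have := hapos x; have := hapos y; linarith
      linarith
    · by_cases hxy : x = y
      · subst hxy
        rw [if_pos rfl, if_neg hxz]
        simp
      · by_cases hyz : y = z
        · subst hyz
          rw [if_pos rfl, if_neg hxy]
          simp
        · rw [if_neg hxz, if_neg hxy, if_neg hyz]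
          have := hapos y; linarith
  · intro S hS4
    rintro ⟨f, hf⟩
    dsimp only at hf
    have hSne : S.Nonempty := Finset.card_pos.mp (by omega)
    set c := S.max' hSne with hc
    have hcS : c ∈ S := S.max'_mem hSne
    have hcard : (S.erase c).card = 3 := by
      rw [Finset.card_erase_of_mem hcS, hS4]
    obtain ⟨x, y, z, hxy, hxz, hyz, hE⟩ := Finset.card_eq_three.mp hcard
    have hxE : x ∈ S.erase c := by rw [hE]; simp
    have hyE : y ∈ S.erase c := by rw [hE]; simp
    have hzE : z ∈ S.erase c := by rw [hE]; simp
    obtain ⟨hxc, hxS⟩ := Finset.mem_erase.mp hxE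
    obtain ⟨hyc, hyS⟩ := Finset.mem_erase.mp hyE
    obtain ⟨hzc, hzS⟩ := Finset.mem_erase.mp hzE
    have hcond : ∀ w ∈ S, w ≠ c → a c / (a w + a c) < modulusOfConvexity X (1/2) := by
      intro w hw hwc
      have hwlt : w < c := lt_of_le_of_ne (S.le_max' w hw) hwc
      have hle : (w:ℕ) + 1 ≤ (c:ℕ) := by
        have := (Fin.lt_iff_val_lt_val).mp hwlt
        omega
      have h1 : a c ≤ τ * a w := by
        calc a c = τ ^ (c:ℕ) := rfl
          _ ≤ τ ^ ((w:ℕ)+1) := pow_le_pow_of_le_one hτ0.le hτ1 hle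
          _ = τ * τ ^ (w:ℕ) := by rw [pow_succ]; ring
      have h2 : a c / (a w + a c) ≤ a c / a w :=
        div_le_div_of_nonneg_left (hapos c).le (hapos w)
          (by linarith [hapos c])
      have h3 : a c / a w ≤ τ := (div_le_iff₀ (hapos w)).mpr h1
      linarith
    have hdist : ∀ w ∈ S, w ≠ c → ‖f w - f c‖ = a w + a c := by
      intro w hw hwc
      have := hf w hw c hcS
      rwa [if_neg hwc] at this
    have hdxy : ∀ u ∈ S, ∀ v ∈ S, u ≠ v →
        ‖(f u - f c) - (f v - f c)‖ = a u + a v := by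
      intro u hu v hv huv
      rw [sub_sub_sub_cancel_right]
      have := hf u hu v hv
      rwa [if_neg huv] at this
    set ex := (a x + a c)⁻¹ • (f x - f c) with hex
    set ey := (a y + a c)⁻¹ • (f y - f c) with hey
    set ez := (a z + a c)⁻¹ • (f z - f c) with hez
    have h1 : ‖ex + ey‖ < 1/2 :=
      pair_lemma (hapos x) (hapos y) (hapos c) (hcond x hxS hxc) (hcond y hyS hyc)
        (hdist x hxS hxc) (hdist y hyS hyc) (hdxy x hxS y hyS hxy)
    have h2 : ‖ex + ez‖ < 1/2 :=
      pair_lemma (hapos x) (hapos z) (hapos c) (hcond x hxS hxc) (hcond z hzS hzc)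
        (hdist x hxS hxc) (hdist z hzS hzc) (hdxy x hxS z hzS hxz)
    have h3 : ‖ey + ez‖ < 1/2 :=
      pair_lemma (hapos y) (hapos z) (hapos c) (hcond y hyS hyc) (hcond z hzS hzc)
        (hdist y hyS hyc) (hdist z hzS hzc) (hdxy y hyS z hzS hyz)
    have hnex : ‖ex‖ = 1 := by
      rw [hex, norm_smul, hdist x hxS hxc, Real.norm_eq_abs, abs_inv,
        abs_of_pos (by linarith [hapos x, hapos c] : (0:ℝ) < a x + a c)]
      field_simp
      exact div_self (by linarith [hapos x, hapos c])
    have hsum : ex + ex = (ex + ey) + (ex + ez) - (ey + ez) := by abel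
    have h2n : ‖ex + ex‖ = 2 := by
      have ht : ex + ex = (2:ℝ) • ex := (two_smul ℝ ex).symm
      rw [ht, norm_smul, hnex]
      norm_num
    have hle2 : ‖ex + ex‖ ≤ ‖ex+ey‖ + ‖ex+ez‖ + ‖ey+ez‖ := by
      rw [hsum]
      calc ‖(ex+ey)+(ex+ez)-(ey+ez)‖ ≤ ‖(ex+ey)+(ex+ez)‖ + ‖ey+ez‖ :=
            norm_sub_le _ _
        _ ≤ ‖ex+ey‖ + ‖ex+ez‖ + ‖ey+ez‖ := by
            linarith [norm_add_le (ex+ey) (ex+ez)]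
    linarith
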